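/- Let {T_n}_{n≥0} be a sequence of invertible operators on a Hilbert space H satisfying c‖x‖ ≤ ‖T_n x‖ ≤ ‖x‖ for all x ∈ H, all n, and some fixed c > 0. Then the operator-valued weighted shift S on the H-valued Hardy space H²_H(𝔻), defined by S(zⁿ ⊗ x) = z^(n+1) ⊗ T_n x, is a near-isometry. -/

import Mathlib

open ContinuousLinearMap

local notation "⟪" x ", " y "⟫" => @inner ℂ _ _ x y

/-- A bounded operator `S` on a complex Hilbert space is a *near-isometry* if
it is a bounded-below contraction with `S*ⁿ Sⁿ⁺¹ K ⊆ S K` for all `n ≥ 0`. -/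
def IsNearIsometry {K : Type*} [NormedAddCommGroup K] [InnerProductSpace ℂ K]
    [CompleteSpace K] (S : K →L[ℂ] K) : Prop :=
  (∃ δ > (0 : ℝ), ∀ x : K, δ * ‖x‖ ≤ ‖S x‖ ∧ ‖S x‖ ≤ ‖x‖) ∧
  ∀ n : ℕ, ∀ x : K, ∃ y : K, ((adjoint S) ^ n) ((S ^ (n + 1)) x) = S y

set_option maxHeartbeats 1000000 in
/-- The operator-valued weighted shift `S(zⁿ ⊗ x) = zⁿ⁺¹ ⊗ Tₙ x` on the `H`-valued
Hardy space (modelled as `ℓ²(ℕ, H)`), with invertible weights `Tₙ` satisfying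
`c‖x‖ ≤ ‖Tₙ x‖ ≤ ‖x‖`, is a near-isometry. -/
theorem stmt4 {H : Type*} [NormedAddCommGroup H] [InnerProductSpace ℂ H] [CompleteSpace H]
    (Tseq : ℕ → (H →L[ℂ] H)) (c : ℝ) (hc : 0 < c)
    (hinv : ∀ n, IsUnit (Tseq n))
    (hbd : ∀ (n : ℕ) (x : H), c * ‖x‖ ≤ ‖Tseq n x‖ ∧ ‖Tseq n x‖ ≤ ‖x‖)
    (S : lp (fun _ : ℕ => H) 2 →L[ℂ] lp (fun _ : ℕ => H) 2)
    (hS : ∀ (n : ℕ) (x : H), S (lp.single 2 n x) = lp.single 2 (n + 1) (Tseq n x)) :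
    IsNearIsometry S := by
  -- componentwise formula for the adjoint
  have hadj : ∀ (g : lp (fun _ : ℕ => H) 2) (n : ℕ),
      (adjoint S g) n = adjoint (Tseq n) (g (n + 1)) := by
    intro g n
    apply ext_inner_right ℂ
    intro x
    have h1 : ⟪(adjoint S g) n, x⟫ = ⟪adjoint S g, lp.single 2 n x⟫ :=
      (lp.inner_single_right (𝕜 := ℂ) n x (adjoint S g)).symm
    rw [h1, adjoint_inner_left, hS, lp.inner_single_right, adjoint_inner_left]
  -- componentwise formula for S
  have hS0 : ∀ f : lp (fun _ : ℕ => H) 2, (S f) 0 = 0 := by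
    intro f
    apply ext_inner_right ℂ
    intro x
    have h2 : adjoint S (lp.single 2 0 x) = 0 := by
      apply lp.ext; funext m
      rw [hadj, lp.single_apply_ne (E := fun _ : ℕ => H) 2 0 x (Nat.succ_ne_zero m), map_zero]
      simp
    have h1 : ⟪(S f) 0, x⟫ = ⟪S f, lp.single 2 0 x⟫ :=
      (lp.inner_single_right (𝕜 := ℂ) 0 x (S f)).symm
    rw [h1, ← adjoint_inner_right, h2, inner_zero_right, inner_zero_left]
  have hSsucc : ∀ (f : lp (fun _ : ℕ => H) 2) (n : ℕ), (S f) (n + 1) = Tseq n (f n) := by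
    intro f n
    apply ext_inner_right ℂ
    intro x
    have h2 : adjoint S (lp.single 2 (n + 1) x) = lp.single 2 n (adjoint (Tseq n) x) := by
      apply lp.ext; funext m
      rw [hadj]
      by_cases hm : m = n
      · subst hm; rw [lp.single_apply_self (E := fun _ : ℕ => H), lp.single_apply_self (E := fun _ : ℕ => H)]
      · rw [lp.single_apply_ne (E := fun _ : ℕ => H) 2 (n + 1) x (by omega : m + 1 ≠ n + 1), map_zero,
          lp.single_apply_ne (E := fun _ : ℕ => H) 2 n _ hm]
    calc ⟪(S f) (n + 1), x⟫ = ⟪S f, lp.single 2 (n + 1) x⟫ :=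
          (lp.inner_single_right (𝕜 := ℂ) (n + 1) x (S f)).symm
      _ = ⟪f, adjoint S (lp.single 2 (n + 1) x)⟫ := (adjoint_inner_right _ _ _).symm
      _ = ⟪f n, adjoint (Tseq n) x⟫ := by rw [h2, lp.inner_single_right]
      _ = ⟪Tseq n (f n), x⟫ := adjoint_inner_right _ _ _
  -- norm identities
  have htr : (2 : ENNReal).toReal = 2 := by norm_num
  have hsum : ∀ f : lp (fun _ : ℕ => H) 2,
      HasSum (fun n => ‖f n‖ ^ (2 : ℝ)) (‖f‖ ^ (2 : ℝ)) := by
    intro f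
    have := lp.hasSum_norm (p := 2) (by rw [htr]; norm_num) f
    simpa [htr] using this
  have hSnorm : ∀ f : lp (fun _ : ℕ => H) 2,
      HasSum (fun n => ‖Tseq n (f n)‖ ^ (2 : ℝ)) (‖S f‖ ^ (2 : ℝ)) := by
    intro f
    have h := hsum (S f)
    have h1 := (hasSum_nat_add_iff' (f := fun n => ‖(S f) n‖ ^ (2 : ℝ)) 1).mpr h
    simp only [Finset.range_one, Finset.sum_singleton, hS0 f, norm_zero] at h1
    rw [Real.zero_rpow (by norm_num), sub_zero] at h1
    simpa [hSsucc f] using h1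
  have hub : ∀ f : lp (fun _ : ℕ => H) 2, ‖S f‖ ≤ ‖f‖ := by
    intro f
    have h1 : ‖S f‖ ^ (2 : ℝ) ≤ ‖f‖ ^ (2 : ℝ) :=
      hasSum_le (fun n => Real.rpow_le_rpow (norm_nonneg _) ((hbd n (f n)).2) (by norm_num))
        (hSnorm f) (hsum f)
    rw [show (2 : ℝ) = ((2 : ℕ) : ℝ) by norm_num, Real.rpow_natCast, Real.rpow_natCast] at h1
    have h2 := Real.sqrt_le_sqrt h1
    rwa [Real.sqrt_sq (norm_nonneg _), Real.sqrt_sq (norm_nonneg _)] at h2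
  have hlb : ∀ f : lp (fun _ : ℕ => H) 2, c * ‖f‖ ≤ ‖S f‖ := by
    intro f
    have hls : HasSum (fun n => (c * ‖f n‖) ^ (2 : ℝ)) ((c * ‖f‖) ^ (2 : ℝ)) := by
      have h := (hsum f).mul_left (c ^ (2 : ℝ))
      have heq : (fun n => (c * ‖f n‖) ^ (2 : ℝ)) =
          fun n => c ^ (2 : ℝ) * ‖f n‖ ^ (2 : ℝ) := by
        funext n; exact Real.mul_rpow hc.le (norm_nonneg _)
      rw [heq, Real.mul_rpow hc.le (norm_nonneg _)]
      exact h
    have h1 : (c * ‖f‖) ^ (2 : ℝ) ≤ ‖S f‖ ^ (2 : ℝ) :=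
      hasSum_le (fun n => Real.rpow_le_rpow (mul_nonneg hc.le (norm_nonneg _))
        ((hbd n (f n)).1) (by norm_num)) hls (hSnorm f)
    rw [show (2 : ℝ) = ((2 : ℕ) : ℝ) by norm_num, Real.rpow_natCast, Real.rpow_natCast] at h1
    have h2 := Real.sqrt_le_sqrt h1
    rwa [Real.sqrt_sq (mul_nonneg hc.le (norm_nonneg _)), Real.sqrt_sq (norm_nonneg _)] at h2
  -- inverses of the weights
  set Tinv : ℕ → (H →L[ℂ] H) := fun n => ((hinv n).unit⁻¹ : (H →L[ℂ] H)ˣ) with hTinv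
  have hTy : ∀ (n : ℕ) (v : H), Tseq n ((Tinv n) v) = v := by
    intro n v
    have h2 : Tseq n * (Tinv n) = 1 := by
      conv_lhs => rw [← (hinv n).unit_spec]
      exact (hinv n).unit.mul_inv
    calc Tseq n ((Tinv n) v)
        = (Tseq n * (Tinv n)) v := (ContinuousLinearMap.mul_apply _ _ _).symm
      _ = v := by rw [h2, ContinuousLinearMap.one_apply]
  -- everything vanishing at 0 is in the range of S
  have hrange : ∀ g : lp (fun _ : ℕ => H) 2, g 0 = 0 →
      ∃ y : lp (fun _ : ℕ => H) 2, S y = g := by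
    intro g hg0
    set y : ∀ _ : ℕ, H := fun n => (Tinv n) (g (n + 1)) with hy
    have hyle : ∀ n, ‖y n‖ ≤ c⁻¹ * ‖g (n + 1)‖ := by
      intro n
      have h3 : c * ‖y n‖ ≤ ‖g (n + 1)‖ := by
        have := (hbd n (y n)).1
        rwa [show Tseq n (y n) = g (n + 1) from hTy n _] at this
      have h4 := mul_le_mul_of_nonneg_left h3 (inv_nonneg.mpr hc.le)
      rwa [← mul_assoc, inv_mul_cancel₀ hc.ne', one_mul] at h4
    have hg2 : Summable (fun n => ‖g (n + 1)‖ ^ (2 : ℝ)) := by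
      have := ((hsum g).summable).comp_injective (add_left_injective 1)
      exact this
    have hy2 : Summable (fun n => ‖y n‖ ^ (2 : ℝ)) := by
      apply Summable.of_nonneg_of_le (fun n => Real.rpow_nonneg (norm_nonneg _) _)
        (fun n => ?_) (hg2.mul_left ((c⁻¹) ^ (2 : ℝ)))
      calc ‖y n‖ ^ (2 : ℝ) ≤ (c⁻¹ * ‖g (n + 1)‖) ^ (2 : ℝ) :=
            Real.rpow_le_rpow (norm_nonneg _) (hyle n) (by norm_num)
        _ = c⁻¹ ^ (2 : ℝ) * ‖g (n + 1)‖ ^ (2 : ℝ) :=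
            Real.mul_rpow (inv_nonneg.mpr hc.le) (norm_nonneg _)
    have hmem : Memℓp y 2 := memℓp_gen (by simpa [htr] using hy2)
    refine ⟨⟨y, hmem⟩, ?_⟩
    apply lp.ext; funext m
    cases m with
    | zero => rw [hS0]; exact hg0.symm
    | succ n =>
      rw [hSsucc]
      exact hTy n _
  -- vanishing of powers
  have hpow : ∀ (k : ℕ) (f : lp (fun _ : ℕ => H) 2) (m : ℕ), m < k → ((S ^ k) f) m = 0 := by
    intro k
    induction k with
    | zero => intro f m hm; exact absurd hm (Nat.not_lt_zero m)
    | succ k ih =>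
      intro f m hm
      have h1 : (S ^ (k + 1)) f = S ((S ^ k) f) := by rw [pow_succ', ContinuousLinearMap.mul_apply]
      rw [h1]
      cases m with
      | zero => exact hS0 _
      | succ m => rw [hSsucc, ih f m (by omega), map_zero]
  have hpowadj : ∀ (k : ℕ) (g : lp (fun _ : ℕ => H) 2), (∀ m, m ≤ k → g m = 0) →
      (((adjoint S) ^ k) g) 0 = 0 := by
    intro k
    induction k with
    | zero => intro g hg; simpa using hg 0 le_rfl
    | succ k ih =>
      intro g hg
      have h1 : ((adjoint S) ^ (k + 1)) g = ((adjoint S) ^ k) (adjoint S g) := by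
        rw [pow_succ, ContinuousLinearMap.mul_apply]
      rw [h1]
      apply ih
      intro m hm
      rw [hadj, hg (m + 1) (by omega), map_zero]
  constructor
  · exact ⟨c, hc, fun f => ⟨hlb f, hub f⟩⟩
  · intro n f
    have h0 : (((adjoint S) ^ n) ((S ^ (n + 1)) f)) 0 = 0 :=
      hpowadj n _ (fun m hm => hpow (n + 1) f m (by omega))
    obtain ⟨y, hy⟩ := hrange _ h0
    exact ⟨y, hy.symm⟩
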